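/- For all positive integers k and h, the k-th positive element γ_k(h) of the greedy B_h-set satisfies γ_k(h) ≥ (1/h)·(binom(k+h, k) − 1). -/

import Mathlib

/-- A set `A` of nonnegative integers is a `B_h`-set if every solution to
`a_1 + ... + a_h = b_1 + ... + b_h` with all `a_i, b_i ∈ A` has
`{a_1, ..., a_h} = {b_1, ..., b_h}` as multisets. -/
def IsBhSet (h : ℕ) (A : Set ℕ) : Prop :=
  ∀ a b : Fin h → ℕ, (∀ i, a i ∈ A) → (∀ i, b i ∈ A) →
    (∑ i, a i) = (∑ i, b i) →
    Multiset.map a Finset.univ.val = Multiset.map b Finset.univ.val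

/-- Auxiliary construction of the greedy `B_h`-set: `greedyAux h k` is the pair
consisting of the `k`-th element `γ_k(h)` of the greedy `B_h`-set together with
the finite set `{γ_0(h), ..., γ_k(h)}`.  We have `γ_0(h) = 0`, `γ_1(h) = 1`, and
for `k ≥ 1`, `γ_{k+1}(h)` is the smallest integer greater than `γ_k(h)` such
that `{γ_0(h), ..., γ_k(h), γ_{k+1}(h)}` is a `B_h`-set. -/
noncomputable def greedyAux (h : ℕ) : ℕ → ℕ × Finset ℕ
  | 0 => (0, {0})
  | (k + 1) =>
    let p := greedyAux h k
    let g := if k = 0 then 1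
      else sInf {x : ℕ | p.1 < x ∧ IsBhSet h ((insert x p.2 : Finset ℕ) : Set ℕ)}
    (g, insert g p.2)

/-- `greedy h k` is the `k`-th element `γ_k(h)` of the greedy `B_h`-set. -/
noncomputable def greedy (h k : ℕ) : ℕ := (greedyAux h k).1

lemma ofFn_get_cast {α : Type*} (l : List α) {h : ℕ} (e : l.length = h) :
    List.ofFn (fun i : Fin h => l.get (Fin.cast e.symm i)) = l := by
  subst e; exact List.ofFn_get l

lemma bh_iff (h : ℕ) (A : Set ℕ) : IsBhSet h A ↔
    ∀ s t : Multiset ℕ, Multiset.card s = h → Multiset.card t = h →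
      (∀ x ∈ s, x ∈ A) → (∀ x ∈ t, x ∈ A) → s.sum = t.sum → s = t := by
  constructor
  · intro H s t hs ht hsA htA hsum
    have hls : s.toList.length = h := by simpa using hs
    have hlt : t.toList.length = h := by simpa using ht
    set a : Fin h → ℕ := fun i => s.toList.get (Fin.cast hls.symm i) with ha
    set b : Fin h → ℕ := fun i => t.toList.get (Fin.cast hlt.symm i) with hb
    have hma : Multiset.map a Finset.univ.val = s := by
      rw [Fin.univ_val_map, ofFn_get_cast s.toList hls, Multiset.coe_toList]
    have hmb : Multiset.map b Finset.univ.val = t := by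
      rw [Fin.univ_val_map, ofFn_get_cast t.toList hlt, Multiset.coe_toList]
    have := H a b (fun i => hsA _ (by rw [← Multiset.mem_toList]; exact List.get_mem _ _))
      (fun i => htA _ (by rw [← Multiset.mem_toList]; exact List.get_mem _ _))
      (by rw [show (∑ i, a i) = (Multiset.map a Finset.univ.val).sum from rfl,
              show (∑ i, b i) = (Multiset.map b Finset.univ.val).sum from rfl, hma, hmb, hsum])
    rwa [hma, hmb] at this
  · intro H a b ha hb hsum
    apply H (Multiset.map a Finset.univ.val) (Multiset.map b Finset.univ.val)
    · simp
    · simp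
    · simp only [Multiset.mem_map]; rintro x ⟨i, _, rfl⟩; exact ha i
    · simp only [Multiset.mem_map]; rintro x ⟨i, _, rfl⟩; exact hb i
    · exact hsum

lemma bh_zero (h : ℕ) : IsBhSet h (({0} : Finset ℕ) : Set ℕ) := by
  rw [bh_iff]
  intro s t hs ht hsA htA _
  have h1 : s = Multiset.replicate h 0 := by
    rw [Multiset.eq_replicate]
    exact ⟨hs, fun x hx => by simpa using hsA x hx⟩
  have h2 : t = Multiset.replicate h 0 := by
    rw [Multiset.eq_replicate]
    exact ⟨ht, fun x hx => by simpa using htA x hx⟩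
  rw [h1, h2]

lemma count_one_sum (s : Multiset ℕ) (hs : ∀ x ∈ s, x = 0 ∨ x = 1) :
    s.count 1 = s.sum := by
  induction s using Multiset.induction_on with
  | empty => simp
  | cons a s ih =>
    have := hs a (Multiset.mem_cons_self a s)
    have ih := ih (fun x hx => hs x (Multiset.mem_cons_of_mem hx))
    rcases this with rfl | rfl <;> simp [ih, Multiset.count_cons] <;> omega

lemma count_zero_add (s : Multiset ℕ) (hs : ∀ x ∈ s, x = 0 ∨ x = 1) :
    s.count 0 + s.count 1 = Multiset.card s := by
  induction s using Multiset.induction_on with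
  | empty => simp
  | cons a s ih =>
    have := hs a (Multiset.mem_cons_self a s)
    have ih := ih (fun x hx => hs x (Multiset.mem_cons_of_mem hx))
    rcases this with rfl | rfl <;> simp [Multiset.count_cons] <;> omega

lemma bh_zero_one (h : ℕ) : IsBhSet h ((insert 1 ({0} : Finset ℕ) : Finset ℕ) : Set ℕ) := by
  rw [bh_iff]
  intro s t hs ht hsA htA hsum
  have hsA' : ∀ x ∈ s, x = 0 ∨ x = 1 := fun x hx => by
    have := hsA x hx; simp at this; tauto
  have htA' : ∀ x ∈ t, x = 0 ∨ x = 1 := fun x hx => by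
    have := htA x hx; simp at this; tauto
  ext n
  rcases eq_or_ne n 1 with rfl | hn1
  · rw [count_one_sum s hsA', count_one_sum t htA', hsum]
  rcases eq_or_ne n 0 with rfl | hn0
  · have e1 := count_zero_add s hsA'
    have e2 := count_zero_add t htA'
    have e3 := count_one_sum s hsA'
    have e4 := count_one_sum t htA'
    omega
  · rw [Multiset.count_eq_zero_of_notMem, Multiset.count_eq_zero_of_notMem]
    · intro hm; rcases htA' n hm with rfl | rfl <;> simp at hn0 hn1
    · intro hm; rcases hsA' n hm with rfl | rfl <;> simp at hn0 hn1

lemma bh_insert (h : ℕ) (hh : 1 ≤ h) (F : Finset ℕ) (m : ℕ) (h0 : 0 ∈ F) (hm : ∀ y ∈ F, y ≤ m)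
    (hF : IsBhSet h (F : Set ℕ)) :
    IsBhSet h ((insert (h * m + 1) F : Finset ℕ) : Set ℕ) := by
  set x := h * m + 1 with hx
  rw [bh_iff] at hF ⊢
  intro s t hs ht hsA htA hsum
  -- elements are either x or in F
  have hsA' : ∀ y ∈ s, y = x ∨ y ∈ F := fun y hy => by
    have := hsA y hy; simpa using this
  have htA' : ∀ y ∈ t, y = x ∨ y ∈ F := fun y hy => by
    have := htA y hy; simpa using this
  have hmh : m ≤ h * m := Nat.le_mul_of_pos_left m (by omega)
  have hxF : x ∉ F := fun hxf => by have := hm x hxf; omega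
  -- decomposition facts
  have decomp : ∀ u : Multiset ℕ, Multiset.card u = h → (∀ y ∈ u, y = x ∨ y ∈ F) →
      u = Multiset.replicate (u.count x) x + u.filter (· ≠ x) ∧
      Multiset.card (u.filter (· ≠ x)) = h - u.count x ∧
      u.count x ≤ h ∧
      (∀ y ∈ u.filter (· ≠ x), y ∈ F) ∧
      u.sum = u.count x * x + (u.filter (· ≠ x)).sum ∧
      u.count x * x ≤ u.sum ∧ u.sum < (u.count x + 1) * x := by
    intro u hu hA
    have hdec : Multiset.filter (· = x) u + Multiset.filter (· ≠ x) u = u :=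
      Multiset.filter_add_not _ u
    have hfe : Multiset.filter (· = x) u = Multiset.replicate (u.count x) x := by
      rw [Multiset.filter_eq']
    have hd : u = Multiset.replicate (u.count x) x + u.filter (· ≠ x) := by
      rw [← hfe, hdec]
    have hcle : u.count x ≤ h := hu ▸ Multiset.count_le_card x u
    have hcard : Multiset.card (u.filter (· ≠ x)) = h - u.count x := by
      have := congrArg Multiset.card hd
      rw [Multiset.card_add, Multiset.card_replicate, hu] at this
      omega
    have hmemF : ∀ y ∈ u.filter (· ≠ x), y ∈ F := by
      intro y hy
      rw [Multiset.mem_filter] at hy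
      rcases hA y hy.1 with rfl | hyF
      · exact absurd rfl hy.2
      · exact hyF
    have hsum' : u.sum = u.count x * x + (u.filter (· ≠ x)).sum := by
      conv_lhs => rw [hd]
      simp [Multiset.sum_replicate, mul_comm]
    have hfb : (u.filter (· ≠ x)).sum ≤ (h - u.count x) * m := by
      have := Multiset.sum_le_card_nsmul (u.filter (· ≠ x)) m (fun y hy => hm y (hmemF y hy))
      rwa [hcard, smul_eq_mul] at this
    refine ⟨hd, hcard, hcle, hmemF, hsum', by omega, ?_⟩
    have : (h - u.count x) * m ≤ h * m := Nat.mul_le_mul_right m (Nat.sub_le h _)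
    calc u.sum = u.count x * x + (u.filter (· ≠ x)).sum := hsum'
      _ ≤ u.count x * x + h * m := by omega
      _ < u.count x * x + x := by omega
      _ = (u.count x + 1) * x := by ring
  obtain ⟨sd, scard, scle, smem, ssum, slb, sub⟩ := decomp s hs hsA'
  obtain ⟨td, tcard, tcle, tmem, tsum, tlb, tub⟩ := decomp t ht htA'
  have hxpos : 0 < x := by omega
  have hpq : s.count x = t.count x := by
    have h1 : s.count x * x < (t.count x + 1) * x := by omega
    have h2 : t.count x * x < (s.count x + 1) * x := by omega
    have := Nat.lt_of_mul_lt_mul_right h1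
    have := Nat.lt_of_mul_lt_mul_right h2
    omega
  -- pad with zeros and apply hF
  set p := s.count x with hp
  have hseq : (s.filter (· ≠ x) + Multiset.replicate p 0) =
      (t.filter (· ≠ x) + Multiset.replicate p 0) := by
    apply hF
    · rw [Multiset.card_add, Multiset.card_replicate, scard]; omega
    · rw [Multiset.card_add, Multiset.card_replicate, tcard]; omega
    · intro y hy
      rcases Multiset.mem_add.1 hy with hy | hy
      · exact smem y hy
      · simp [Multiset.eq_of_mem_replicate hy, h0]
    · intro y hy
      rcases Multiset.mem_add.1 hy with hy | hy
      · exact tmem y hy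
      · simp [Multiset.eq_of_mem_replicate hy, h0]
    · rw [Multiset.sum_add, Multiset.sum_add, Multiset.sum_replicate, smul_zero]
      have tsum' : t.sum = p * x + (t.filter (· ≠ x)).sum := by rw [tsum, ← hpq]
      omega
  have hfeq : s.filter (· ≠ x) = t.filter (· ≠ x) := add_right_cancel hseq
  rw [sd, td, ← hpq, hfeq]

lemma greedy_inv (h : ℕ) (hh : 1 ≤ h) : ∀ k : ℕ,
    IsBhSet h ((greedyAux h k).2 : Set ℕ) ∧ (greedyAux h k).2.card = k + 1 ∧
    0 ∈ (greedyAux h k).2 ∧ ∀ y ∈ (greedyAux h k).2, y ≤ (greedyAux h k).1 := by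
  intro k
  induction k with
  | zero => exact ⟨bh_zero h, by simp [greedyAux], by simp [greedyAux], by simp [greedyAux]⟩
  | succ k ih =>
    obtain ⟨ihbh, ihcard, ih0, ihle⟩ := ih
    rcases Nat.eq_zero_or_pos k with rfl | hk
    · have e : greedyAux h 1 = (1, insert 1 {0}) := by simp [greedyAux]
      refine ⟨by rw [e]; exact bh_zero_one h, by rw [e]; simp, by rw [e]; simp, ?_⟩
      rw [e]; intro y hy; simp at hy; rcases hy with rfl | rfl <;> omega
    · have hk0 : k ≠ 0 := by omega
      have e : greedyAux h (k+1) =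
          (sInf {x : ℕ | (greedyAux h k).1 < x ∧
             IsBhSet h ((insert x (greedyAux h k).2 : Finset ℕ) : Set ℕ)},
           insert (sInf {x : ℕ | (greedyAux h k).1 < x ∧
             IsBhSet h ((insert x (greedyAux h k).2 : Finset ℕ) : Set ℕ)}) (greedyAux h k).2) := by
        rw [greedyAux]
        simp [hk0]
      set T := {x : ℕ | (greedyAux h k).1 < x ∧
          IsBhSet h ((insert x (greedyAux h k).2 : Finset ℕ) : Set ℕ)} with hT
      have hmem : h * (greedyAux h k).1 + 1 ∈ T := by
        constructor
        · have := Nat.le_mul_of_pos_left (greedyAux h k).1 (show 0 < h by omega)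
          omega
        · exact bh_insert h hh _ _ ih0 ihle ihbh
      have hg : sInf T ∈ T := Nat.sInf_mem ⟨_, hmem⟩
      have hgt : (greedyAux h k).1 < sInf T := hg.1
      have hnm : sInf T ∉ (greedyAux h k).2 := fun hmem' => by
        have := ihle _ hmem'; omega
      refine ⟨by rw [e]; exact hg.2, ?_, ?_, ?_⟩
      · rw [e]; simpa [Finset.card_insert_of_notMem hnm] using ihcard
      · rw [e]; exact Finset.mem_insert_of_mem ih0
      · rw [e]
        intro y hy
        rcases Finset.mem_insert.1 hy with rfl | hy
        · exact le_refl _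
        · have := ihle y hy; omega

lemma greedy_count (h k : ℕ) (hh : 1 ≤ h) :
    (k + h).choose k ≤ h * greedy h k + 1 := by
  obtain ⟨hbh, hcard, h0, hle⟩ := greedy_inv h hh k
  rw [bh_iff] at hbh
  set F := (greedyAux h k).2 with hF
  set γ := greedy h k with hγ
  have hbsum : ∀ s : Sym {x // x ∈ F} h,
      ((s : Multiset {x // x ∈ F}).map Subtype.val).sum < h * γ + 1 := by
    intro s
    have := Multiset.sum_le_card_nsmul ((s : Multiset {x // x ∈ F}).map Subtype.val) γ
      (fun y hy => by
        rw [Multiset.mem_map] at hy; obtain ⟨z, _, rfl⟩ := hy; exact hle _ z.2)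
    have hc : Multiset.card (↑s : Multiset {x // x ∈ F}) = h := s.2
    rw [Multiset.card_map, hc, smul_eq_mul] at this
    omega
  have key : Fintype.card (Sym {x // x ∈ F} h) ≤ Fintype.card (Fin (h * γ + 1)) := by
    apply Fintype.card_le_of_injective
      (fun (s : Sym {x // x ∈ F} h) => (⟨((s : Multiset {x // x ∈ F}).map Subtype.val).sum, hbsum s⟩ : Fin (h * γ + 1)))
    intro s t hst
    have hsum : ((s : Multiset {x // x ∈ F}).map Subtype.val).sum =
        ((t : Multiset {x // x ∈ F}).map Subtype.val).sum := congrArg Fin.val hst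
    have hcards : Multiset.card ((s : Multiset {x // x ∈ F}).map Subtype.val) = h := by
      have hc : Multiset.card (↑s : Multiset {x // x ∈ F}) = h := s.2
      rw [Multiset.card_map]; exact hc
    have hcardt : Multiset.card ((t : Multiset {x // x ∈ F}).map Subtype.val) = h := by
      have hc : Multiset.card (↑t : Multiset {x // x ∈ F}) = h := t.2
      rw [Multiset.card_map]; exact hc
    have hmems : ∀ y ∈ (s : Multiset {x // x ∈ F}).map Subtype.val, y ∈ (F : Set ℕ) := by
      intro y hy; rw [Multiset.mem_map] at hy; obtain ⟨z, _, rfl⟩ := hy; exact z.2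
    have hmemt : ∀ y ∈ (t : Multiset {x // x ∈ F}).map Subtype.val, y ∈ (F : Set ℕ) := by
      intro y hy; rw [Multiset.mem_map] at hy; obtain ⟨z, _, rfl⟩ := hy; exact z.2
    have := hbh _ _ hcards hcardt hmems hmemt hsum
    have hm : (s : Multiset {x // x ∈ F}) = (t : Multiset {x // x ∈ F}) :=
      Multiset.map_injective Subtype.val_injective this
    exact Subtype.ext hm
  rw [Fintype.card_fin] at key
  have hsym : Fintype.card (Sym {x // x ∈ F} h) = (k + h).choose k := by
    rw [Sym.card_sym_eq_choose, Fintype.card_coe, hcard]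
    rw [show k + 1 + h - 1 = k + h by omega, Nat.add_comm k h, Nat.choose_symm_add]
  omega

theorem stmt_3 (h k : ℕ) (hh : 1 ≤ h) (hk : 1 ≤ k) :
    (greedy h k : ℚ) ≥ (((k + h).choose k : ℚ) - 1) / h := by
  have hc := greedy_count h k hh
  rw [ge_iff_le, div_le_iff₀ (show (0:ℚ) < h by exact_mod_cast hh)]
  have h1 : ((k + h).choose k : ℚ) ≤ h * (greedy h k : ℚ) + 1 := by exact_mod_cast hc
  linarith
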